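/- Let C be an [n, k] generalized Reed–Solomon code over F_q with d = n − k + 1. For any y ∈ F_q^n, the iterative puncturing procedure — which at step i (starting at i = 0) attempts to find a codeword of the i-times-punctured code (punctured at the last i coordinates) within its unique decoding radius of the truncation y[1..n−i], and on success re-encodes the recovered message polynomial in C — terminates after at most d − 1 punctures and returns a codeword c ∈ C with Hamming distance d_H(y, c) ≤ d − 1. -/

import Mathlib

/-- Correctness of the iterative puncturing covering procedure for an `[n, k]` GRS code
with `d = n - k + 1`:  (i) there is some number of punctures `i ≤ d - 1 = n - k` at which
unique decoding of the truncated word (within radius `⌊(d-1-i)/2⌋ = (n-k-i)/2`) succeeds;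
(ii) whenever it succeeds at step `i ≤ n - k`, the re-encoded codeword is within Hamming
distance `d - 1 = n - k` of `y`. -/
theorem stmt6 (F : Type*) [Field F] [DecidableEq F] (n k : ℕ) (hk : 1 ≤ k) (hkn : k ≤ n)
    (α : Fin n → F) (hα : Function.Injective α) (v : Fin n → F) (hv : ∀ i, v i ≠ 0)
    (y : Fin n → F) :
    (∃ i ≤ n - k, ∃ f : Polynomial F, f.degree < (k : WithBot ℕ) ∧
      hammingDist (fun j : Fin (n - i) => y (Fin.castLE (Nat.sub_le n i) j))
        (fun j : Fin (n - i) => v (Fin.castLE (Nat.sub_le n i) j) *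
          f.eval (α (Fin.castLE (Nat.sub_le n i) j))) ≤ (n - k - i) / 2) ∧
    (∀ i ≤ n - k, ∀ f : Polynomial F, f.degree < (k : WithBot ℕ) →
      hammingDist (fun j : Fin (n - i) => y (Fin.castLE (Nat.sub_le n i) j))
        (fun j : Fin (n - i) => v (Fin.castLE (Nat.sub_le n i) j) *
          f.eval (α (Fin.castLE (Nat.sub_le n i) j))) ≤ (n - k - i) / 2 →
      hammingDist y (fun j => v j * f.eval (α j)) ≤ n - k) := by
  constructor
  · -- take i = n - k; then n - i = k and interpolation gives exact agreement
    refine ⟨n - k, le_refl _, ?_⟩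
    set i := n - k with hi
    have hni : n - i = k := by omega
    set β : Fin (n - i) → F := fun j => α (Fin.castLE (Nat.sub_le n i) j) with hβ
    have hβinj : Set.InjOn β (Finset.univ : Finset (Fin (n - i))) := by
      intro a _ b _ hab
      exact Fin.castLE_injective _ (hα hab)
    set r : Fin (n - i) → F :=
      fun j => y (Fin.castLE (Nat.sub_le n i) j) / v (Fin.castLE (Nat.sub_le n i) j) with hr
    refine ⟨Lagrange.interpolate Finset.univ β r, ?_, ?_⟩
    · have := Lagrange.degree_interpolate_lt r hβinj
      simpa [hni] using this
    · have heq : (fun j : Fin (n - i) => y (Fin.castLE (Nat.sub_le n i) j)) =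
          (fun j : Fin (n - i) => v (Fin.castLE (Nat.sub_le n i) j) *
            (Lagrange.interpolate Finset.univ β r).eval (α (Fin.castLE (Nat.sub_le n i) j))) := by
        funext j
        have := Lagrange.eval_interpolate_at_node r hβinj (Finset.mem_univ j)
        rw [show α (Fin.castLE (Nat.sub_le n i) j) = β j from rfl, this, hr,
          mul_div_cancel₀ _ (hv _)]
      rw [heq, hammingDist_self]
      exact Nat.zero_le _
  · intro i hi f hf hdist
    have key : hammingDist y (fun j => v j * f.eval (α j)) ≤
        hammingDist (fun j : Fin (n - i) => y (Fin.castLE (Nat.sub_le n i) j))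
          (fun j : Fin (n - i) => v (Fin.castLE (Nat.sub_le n i) j) *
            f.eval (α (Fin.castLE (Nat.sub_le n i) j))) + i := by
      unfold hammingDist
      set c : Fin n → F := fun j => v j * f.eval (α j) with hc
      have hsplit : (Finset.univ.filter fun j : Fin n => y j ≠ c j) =
          ((Finset.univ.filter fun j : Fin n => y j ≠ c j).filter fun j : Fin n => (j : ℕ) < n - i) ∪
          ((Finset.univ.filter fun j : Fin n => y j ≠ c j).filter fun j : Fin n => ¬ (j : ℕ) < n - i) :=
        (Finset.filter_union_filter_not_eq _ _).symm
      rw [hsplit]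
      refine le_trans (Finset.card_union_le _ _) (Nat.add_le_add ?_ ?_)
      · have hpos : 0 < n - i := by omega
        apply Finset.card_le_card_of_injOn
          (fun j : Fin n => if h : (j : ℕ) < n - i then (⟨(j : ℕ), h⟩ : Fin (n - i))
            else ⟨0, hpos⟩)
        · intro j hj
          simp only [Finset.mem_coe, Finset.mem_filter, Finset.mem_univ, true_and] at hj ⊢
          obtain ⟨hne, hlt⟩ := hj
          rw [dif_pos hlt]
          have : Fin.castLE (Nat.sub_le n i) (⟨(j : ℕ), hlt⟩ : Fin (n - i)) = j := by
            apply Fin.ext; rfl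
          rw [this]
          exact hne
        · intro a ha b hb hab
          simp only [Finset.mem_coe, Finset.mem_filter] at ha hb
          simp only [dif_pos ha.2, dif_pos hb.2] at hab
          exact Fin.ext (by simpa [Fin.mk.injEq] using hab)
      · calc ((Finset.univ.filter fun j : Fin n => y j ≠ c j).filter
              fun j : Fin n => ¬ (j : ℕ) < n - i).card
            ≤ (Finset.range i).card := by
              apply Finset.card_le_card_of_injOn (fun j : Fin n => (j : ℕ) - (n - i))
              · intro j hj
                simp only [Finset.mem_coe, Finset.mem_filter, Finset.mem_univ, true_and, not_lt] at hj
                have hjn := j.isLt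
                simp only [Finset.mem_coe, Finset.mem_range]
                omega
              · intro a ha b hb hab
                simp only [Finset.mem_coe, Finset.mem_filter, not_lt] at ha hb
                have han := a.isLt; have hbn := b.isLt
                have hab' : (a : ℕ) - (n - i) = (b : ℕ) - (n - i) := hab
                exact Fin.ext (by omega)
          _ = i := Finset.card_range i
    calc hammingDist y (fun j => v j * f.eval (α j)) ≤ _ + i := key
      _ ≤ (n - k - i) / 2 + i := Nat.add_le_add_right hdist i
      _ ≤ n - k := by omega
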